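/- If f, g : ℝⁿ → ℝ ∪ {+∞} each have the descent property on Ω ⊆ ℝⁿ, with constants L_f and L_g respectively, then f + g has the descent property on Ω with constant L_f + L_g. In particular, the proof uses that the descent property forces df(x)(w) > −∞ for all x, w, and hence df(x)(w) + dg(x)(w) ≤ d(f + g)(x)(w) holds for all x, w ∈ ℝⁿ without any qualification condition. -/

import Mathlib

open Filter Topology Set
lemma myMulAddLe (r : ℝ) (hr : 0 < r) (X Y : EReal) :
    (r : EReal) * X + (r : EReal) * Y ≤ (r : EReal) * (X + Y) := by
  induction X with
  | bot => simp [EReal.coe_mul_bot_of_pos hr]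
  | top =>
    induction Y with
    | bot => simp [EReal.coe_mul_bot_of_pos hr]
    | top => simp [EReal.coe_mul_top_of_pos hr]
    | coe y =>
      rw [EReal.coe_mul_top_of_pos hr, ← EReal.coe_mul,
        EReal.top_add_of_ne_bot (EReal.coe_ne_bot _),
        EReal.top_add_of_ne_bot (EReal.coe_ne_bot _), EReal.coe_mul_top_of_pos hr]
  | coe x =>
    induction Y with
    | bot => simp [EReal.coe_mul_bot_of_pos hr]
    | top =>
      rw [EReal.coe_mul_top_of_pos hr, ← EReal.coe_mul,
        EReal.coe_add_top, EReal.add_top_of_ne_bot (EReal.coe_ne_bot _),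
        EReal.coe_mul_top_of_pos hr]
    | coe y => norm_cast; ring_nf; exact le_refl _

lemma mySubAddSubLe (a b c d : EReal) (ha : a ≠ ⊥) (hb : b ≠ ⊥) (hc : c ≠ ⊥) (hd : d ≠ ⊥) :
    (a - c) + (b - d) ≤ (a + b) - (c + d) := by
  induction c with
  | bot => exact absurd rfl hc
  | top => simp [sub_eq_add_neg]
  | coe c' =>
    induction d with
    | bot => exact absurd rfl hd
    | top => simp [sub_eq_add_neg]
    | coe d' =>
      have hcd : (↑c' + ↑d' : EReal) = ((c' + d' : ℝ) : EReal) := by norm_cast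
      induction a with
      | bot => exact absurd rfl ha
      | top =>
        have hr2 : (⊤ : EReal) + b - (↑c' + ↑d') = ⊤ := by
          rw [EReal.top_add_of_ne_bot hb, hcd, sub_eq_add_neg, ← EReal.coe_neg,
            EReal.top_add_of_ne_bot (EReal.coe_ne_bot _)]
        rw [hr2]; exact le_top
      | coe a' =>
        induction b with
        | bot => exact absurd rfl hb
        | top =>
          have hr2 : (↑a' + ⊤ : EReal) - (↑c' + ↑d') = ⊤ := by
            rw [EReal.add_top_of_ne_bot (EReal.coe_ne_bot _), hcd, sub_eq_add_neg,
              ← EReal.coe_neg, EReal.top_add_of_ne_bot (EReal.coe_ne_bot _)]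
          rw [hr2]; exact le_top
        | coe b' => norm_cast; ring_nf; exact le_refl _

/-- The subderivative `df(x̄)(w) := liminf_{t↓0, w'→w} (f(x̄ + t w') − f(x̄))/t`
of an extended-real-valued function. -/
noncomputable def subderiv {n : ℕ} (f : EuclideanSpace ℝ (Fin n) → EReal)
    (x w : EuclideanSpace ℝ (Fin n)) : EReal :=
  Filter.liminf
    (fun p : ℝ × EuclideanSpace ℝ (Fin n) =>
      (((p.1)⁻¹ : ℝ) : EReal) * (f (x + p.1 • p.2) - f x))
    ((𝓝[>] (0:ℝ)) ×ˢ 𝓝 w)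

/-- `F` is semi-differentiable at `x` for the direction `w` with semi-derivative `d`:
`d = lim_{t↓0, w'→w} (F(x + t w') − F(x))/t`. -/
def HasSemiderivAt {E V : Type*} [NormedAddCommGroup E] [NormedSpace ℝ E]
    [NormedAddCommGroup V] [NormedSpace ℝ V]
    (F : E → V) (x w : E) (d : V) : Prop :=
  Filter.Tendsto (fun p : ℝ × E => (p.1)⁻¹ • (F (x + p.1 • p.2) - F x))
    ((𝓝[>] (0:ℝ)) ×ˢ 𝓝 w) (𝓝 d)

/-- `f` has the descent property on `Ω` with constant `L`:
`f(y) ≤ f(x) + df(x)(y − x) + (L/2)‖y − x‖²` for all `x, y ∈ Ω`. -/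
def DescentPropOn {n : ℕ} (f : EuclideanSpace ℝ (Fin n) → EReal)
    (Ω : Set (EuclideanSpace ℝ (Fin n))) (L : ℝ) : Prop :=
  ∀ x ∈ Ω, ∀ y ∈ Ω,
    f y ≤ f x + subderiv f x (y - x) + (((L / 2) * ‖y - x‖ ^ 2 : ℝ) : EReal)

/-- the descent property is preserved under sums, with constant `L_f + L_g`.
Moreover the descent property forces the subderivative to be `> −∞` between points of `Ω`,
and the superadditivity `df(x)(w) + dg(x)(w) ≤ d(f + g)(x)(w)` holds for all `x, w`
without any qualification condition. -/
theorem descent_property_sum {n : ℕ}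
    (f g : EuclideanSpace ℝ (Fin n) → EReal)
    (Ω : Set (EuclideanSpace ℝ (Fin n)))
    -- `f` and `g` take values in ℝ ∪ {+∞}
    (hf_ne_bot : ∀ z, f z ≠ ⊥) (hg_ne_bot : ∀ z, g z ≠ ⊥)
    (Lf Lg : ℝ) (hLf : 0 ≤ Lf) (hLg : 0 ≤ Lg)
    (hf : DescentPropOn f Ω Lf) (hg : DescentPropOn g Ω Lg) :
    DescentPropOn (fun z => f z + g z) Ω (Lf + Lg) ∧
      (∀ x ∈ Ω, ∀ y ∈ Ω, subderiv f x (y - x) ≠ ⊥) ∧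
      (∀ x w, subderiv f x w + subderiv g x w ≤ subderiv (fun z => f z + g z) x w) := by
  have h3 : ∀ x w, subderiv f x w + subderiv g x w ≤ subderiv (fun z => f z + g z) x w := by
    intro x w
    refine le_trans EReal.le_liminf_add (Filter.liminf_le_liminf ?_)
    have hpos : ∀ᶠ p : ℝ × EuclideanSpace ℝ (Fin n) in (𝓝[>] (0:ℝ)) ×ˢ 𝓝 w, 0 < p.1 :=
      Filter.Eventually.prod_inl (eventually_mem_nhdsWithin.mono fun t ht => ht) _
    filter_upwards [hpos] with p hp
    simp only [Pi.add_apply]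
    have hr : (0:ℝ) < (p.1)⁻¹ := inv_pos.2 hp
    refine le_trans (myMulAddLe _ hr _ _)
      (mul_le_mul_of_nonneg_left ?_ (by exact_mod_cast hr.le))
    exact mySubAddSubLe _ _ _ _ (hf_ne_bot _) (hg_ne_bot _) (hf_ne_bot _) (hg_ne_bot _)
  have h2 : ∀ x ∈ Ω, ∀ y ∈ Ω, subderiv f x (y - x) ≠ ⊥ := by
    intro x hx y hy hbot
    have h := hf x hx y hy
    simp only [hbot, EReal.add_bot, EReal.bot_add, le_bot_iff] at h
    exact hf_ne_bot y h
  refine ⟨?_, h2, h3⟩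
  intro x hx y hy
  have Hf := hf x hx y hy
  have Hg := hg x hx y hy
  have key := h3 x (y - x)
  calc f y + g y
      ≤ (f x + subderiv f x (y-x) + (((Lf / 2) * ‖y - x‖ ^ 2 : ℝ) : EReal))
        + (g x + subderiv g x (y-x) + (((Lg / 2) * ‖y - x‖ ^ 2 : ℝ) : EReal)) :=
        add_le_add Hf Hg
    _ = (f x + g x) + (subderiv f x (y-x) + subderiv g x (y-x))
        + ((((Lf / 2) * ‖y - x‖ ^ 2 : ℝ) : EReal) + (((Lg / 2) * ‖y - x‖ ^ 2 : ℝ) : EReal)) := by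
        abel
    _ ≤ (f x + g x) + subderiv (fun z => f z + g z) x (y-x)
        + ((((Lf / 2) * ‖y - x‖ ^ 2 : ℝ) : EReal) + (((Lg / 2) * ‖y - x‖ ^ 2 : ℝ) : EReal)) :=
        add_le_add_left (add_le_add_right key _) _
    _ = (f x + g x) + subderiv (fun z => f z + g z) x (y-x)
        + ((((Lf + Lg) / 2) * ‖y - x‖ ^ 2 : ℝ) : EReal) := by
        rw [← EReal.coe_add]; congr 1; ring
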